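/- In the Gaussian mean estimation problem with squared loss ℓ_p(θ,z) = (θ−z)² and the learning map 𝔪(ν_n) = N( E_{Z∼ν_n}[Z], σ̃²/n ) (the law of the empirical-mean estimator), trained on n i.i.d. samples from N(μ, σ̃²), the weak generalization error equals exactly 2σ̃²/n: E[R(𝔪(ν_n), ν_pop) − R(𝔪(ν_n), ν_n)] = 2σ̃²/n. -/

import Mathlib

open MeasureTheory ProbabilityTheory
open scoped ENNReal NNReal
open Real

lemma my_int_odd (b : ℝ) : ∫ x : ℝ, x * Real.exp (-b * x ^ 2) = 0 := by
  have h := MeasureTheory.integral_neg_eq_self (fun x : ℝ => x * Real.exp (-b * x ^ 2)) volume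
  simp only [neg_sq, neg_mul, integral_neg] at h
  simp only [neg_mul]
  linarith [h]

lemma my_int_sq (b : ℝ) (hb : 0 < b) :
    ∫ x : ℝ, x ^ 2 * Real.exp (-b * x ^ 2) = Real.sqrt (π / b) / (2 * b) := by
  have h := integral_comp_abs (f := fun x : ℝ => x ^ 2 * Real.exp (-b * x ^ 2))
  simp only [sq_abs] at h
  rw [h]
  have h2 := integral_rpow_mul_exp_neg_mul_rpow (p := 2) (q := 2) two_pos (by norm_num) hb
  simp only [show ((2:ℝ)) = ((2:ℕ):ℝ) by norm_num, Real.rpow_natCast] at h2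
  push_cast at h2
  rw [h2]
  have h3 : Real.Gamma ((2 + 1) / 2) = Real.sqrt π / 2 := by
    rw [show ((2:ℝ) + 1) / 2 = 1/2 + 1 by norm_num, Real.Gamma_add_one (by norm_num),
      Real.Gamma_one_half_eq]
    ring
  rw [h3]
  have hsb : (0:ℝ) < Real.sqrt b := Real.sqrt_pos.mpr hb
  have hb32 : b ^ (-(2 + 1:ℝ)/2) = (b * Real.sqrt b)⁻¹ := by
    rw [show (-(2+1:ℝ))/2 = -(1 + 1/2) by norm_num, Real.rpow_neg hb.le, Real.rpow_add hb,
      Real.rpow_one, ← Real.sqrt_eq_rpow]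
  rw [hb32, Real.sqrt_div pi_pos.le]
  have hms : Real.sqrt b * Real.sqrt b = b := Real.mul_self_sqrt hb.le
  field_simp

lemma gauss_int_pdf (μ : ℝ) {v : ℝ≥0} (hv : v ≠ 0) (g : ℝ → ℝ) :
    ∫ x, g x ∂(gaussianReal μ v) = ∫ x, gaussianPDFReal μ v x * g x := by
  rw [gaussianReal_of_var_ne_zero _ hv]
  have h : gaussianPDF μ v = fun x => ((gaussianPDFReal μ v x).toNNReal : ℝ≥0∞) := rfl
  rw [h, integral_withDensity_eq_integral_smul
    (measurable_gaussianPDFReal μ v).real_toNNReal]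
  congr 1; ext x
  rw [NNReal.smul_def, Real.coe_toNNReal _ (gaussianPDFReal_nonneg μ v x)]
  rfl

lemma gauss_integrable_pdf (μ : ℝ) {v : ℝ≥0} (hv : v ≠ 0) (g : ℝ → ℝ) :
    Integrable g (gaussianReal μ v) ↔
      Integrable (fun x => gaussianPDFReal μ v x * g x) volume := by
  rw [gaussianReal_of_var_ne_zero _ hv]
  have h : gaussianPDF μ v = fun x => ((gaussianPDFReal μ v x).toNNReal : ℝ≥0∞) := rfl
  rw [h, integrable_withDensity_iff_integrable_smul
    (measurable_gaussianPDFReal μ v).real_toNNReal]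
  constructor <;> intro hi <;> refine hi.congr (ae_of_all _ fun x => ?_) <;>
    simp only [NNReal.smul_def, Real.coe_toNNReal _ (gaussianPDFReal_nonneg μ v x), smul_eq_mul]

lemma std_pdf (x : ℝ) :
    gaussianPDFReal 0 1 x = (Real.sqrt (2 * π))⁻¹ * (Real.exp (-(1/2) * x ^ 2)) := by
  rw [gaussianPDFReal]
  simp only [NNReal.coe_one, mul_one, sub_zero]
  congr 1
  ring

lemma std_i1 : Integrable (fun x : ℝ => x) (gaussianReal 0 1) := by
  rw [gauss_integrable_pdf 0 one_ne_zero]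
  refine Integrable.congr (((integrable_mul_exp_neg_mul_sq (b := 1/2)
    (by norm_num)).const_mul ((Real.sqrt (2 * π))⁻¹))) (ae_of_all _ fun x => ?_)
  simp only [std_pdf]; ring

lemma std_i2 : Integrable (fun x : ℝ => x ^ 2) (gaussianReal 0 1) := by
  rw [gauss_integrable_pdf 0 one_ne_zero]
  have h0 := integrable_rpow_mul_exp_neg_mul_sq (b := 1/2) (by norm_num)
    (s := 2) (by norm_num)
  simp only [show ((2:ℝ)) = ((2:ℕ):ℝ) by norm_num, Real.rpow_natCast] at h0
  refine Integrable.congr (h0.const_mul ((Real.sqrt (2 * π))⁻¹)) (ae_of_all _ fun x => ?_)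
  simp only [std_pdf]; push_cast; ring

lemma std_m1 : ∫ x, x ∂(gaussianReal 0 1) = 0 := by
  rw [gauss_int_pdf 0 one_ne_zero]
  have : ∀ x : ℝ, gaussianPDFReal 0 1 x * x
      = (Real.sqrt (2 * π))⁻¹ * (x * Real.exp (-(1/2) * x ^ 2)) := by
    intro x; rw [std_pdf]; ring
  simp_rw [this, integral_const_mul, my_int_odd, mul_zero]

lemma std_m2 : ∫ x, x ^ 2 ∂(gaussianReal 0 1) = 1 := by
  rw [gauss_int_pdf 0 one_ne_zero]
  have : ∀ x : ℝ, gaussianPDFReal 0 1 x * x ^ 2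
      = (Real.sqrt (2 * π))⁻¹ * (x ^ 2 * Real.exp (-(1/2) * x ^ 2)) := by
    intro x; rw [std_pdf]; ring
  simp_rw [this, integral_const_mul, my_int_sq (1/2) (by norm_num)]
  rw [show π / (1/2:ℝ) = 2 * π by ring, show ((2:ℝ) * (1/2)) = 1 by norm_num, div_one]
  have h : Real.sqrt (2*π) ≠ 0 := by positivity
  rw [inv_mul_cancel₀ h]

lemma gauss_map (μ : ℝ) (v : ℝ≥0) :
    Measure.map (fun x => Real.sqrt v * x + μ) (gaussianReal 0 1) = gaussianReal μ v := by
  have h1 : Measure.map (fun x : ℝ => Real.sqrt v * x) (gaussianReal 0 1)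
      = gaussianReal 0 v := by
    rw [gaussianReal_map_const_mul (Real.sqrt v)]
    congr 1
    · ring
    · ext
      simp [Real.sq_sqrt (NNReal.coe_nonneg v)]
  have h2 : (fun x : ℝ => Real.sqrt v * x + μ)
      = (fun y : ℝ => y + μ) ∘ (fun x : ℝ => Real.sqrt v * x) := rfl
  rw [h2, ← Measure.map_map (measurable_add_const μ) (measurable_const_mul _), h1,
    gaussianReal_map_add_const μ, zero_add]

lemma gauss_int_std (μ : ℝ) (v : ℝ≥0) {g : ℝ → ℝ}
    (hg : AEStronglyMeasurable g (gaussianReal μ v)) :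
    ∫ x, g x ∂(gaussianReal μ v)
      = ∫ x, g (Real.sqrt v * x + μ) ∂(gaussianReal 0 1) := by
  rw [← gauss_map μ v] at hg ⊢
  exact integral_map (by fun_prop) hg

lemma gauss_integrable_std (μ : ℝ) (v : ℝ≥0) {g : ℝ → ℝ}
    (hg : AEStronglyMeasurable g (gaussianReal μ v)) :
    Integrable g (gaussianReal μ v)
      ↔ Integrable (fun x => g (Real.sqrt v * x + μ)) (gaussianReal 0 1) := by
  rw [← gauss_map μ v] at hg ⊢
  exact integrable_map_measure hg (by fun_prop)

lemma gauss_i1 (μ : ℝ) (v : ℝ≥0) : Integrable (fun x => x) (gaussianReal μ v) := by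
  rw [gauss_integrable_std μ v measurable_id'.aestronglyMeasurable]
  exact (std_i1.const_mul _).add (integrable_const μ)

lemma gauss_i2 (μ : ℝ) (v : ℝ≥0) : Integrable (fun x => x ^ 2) (gaussianReal μ v) := by
  rw [gauss_integrable_std μ v (by fun_prop)]
  have : ∀ x : ℝ, (Real.sqrt v * x + μ) ^ 2
      = (v : ℝ) * x ^ 2 + (2 * Real.sqrt v * μ) * x + μ ^ 2 := by
    intro x
    have h := Real.sq_sqrt (NNReal.coe_nonneg v)
    nlinarith [h]
  simp_rw [this]
  have i2v : Integrable (fun x : ℝ => (v:ℝ) * x ^ 2) (gaussianReal 0 1) := std_i2.const_mul _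
  have i1c : Integrable (fun x : ℝ => (2 * Real.sqrt v * μ) * x) (gaussianReal 0 1) :=
    std_i1.const_mul _
  exact (i2v.add i1c).add (integrable_const _)

lemma gauss_m1 (μ : ℝ) (v : ℝ≥0) : ∫ x, x ∂(gaussianReal μ v) = μ := by
  rw [gauss_int_std μ v measurable_id'.aestronglyMeasurable]
  rw [integral_add (std_i1.const_mul _) (integrable_const μ), integral_const_mul, std_m1,
    integral_const]
  simp

lemma gauss_m2 (μ : ℝ) (v : ℝ≥0) : ∫ x, x ^ 2 ∂(gaussianReal μ v) = μ ^ 2 + v := by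
  rw [gauss_int_std μ v (by fun_prop)]
  have : ∀ x : ℝ, (Real.sqrt v * x + μ) ^ 2
      = (v : ℝ) * x ^ 2 + (2 * Real.sqrt v * μ) * x + μ ^ 2 := by
    intro x
    have h := Real.sq_sqrt (NNReal.coe_nonneg v)
    nlinarith [h]
  simp_rw [this]
  have i2v : Integrable (fun x : ℝ => (v:ℝ) * x ^ 2) (gaussianReal 0 1) := std_i2.const_mul _
  have i1c : Integrable (fun x : ℝ => (2 * Real.sqrt v * μ) * x) (gaussianReal 0 1) :=
    std_i1.const_mul _
  have isum : Integrable (fun x : ℝ => (v:ℝ) * x ^ 2 + (2 * Real.sqrt v * μ) * x)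
      (gaussianReal 0 1) := i2v.add i1c
  rw [integral_add isum (integrable_const _),
    integral_add i2v i1c, integral_const_mul, integral_const_mul, std_m1, std_m2, integral_const]
  simp
  ring

/-- The empirical measure of the first `n` samples. -/
noncomputable def empMeas {Ω : Type*} [MeasurableSpace Ω] (n : ℕ) (Z : ℕ → Ω → ℝ)
    (ω : Ω) : Measure ℝ :=
  (n : ℝ≥0∞)⁻¹ • ∑ i ∈ Finset.range n, Measure.dirac (Z i ω)

/-- The expected squared loss of the parameter measure `m` at the data point `z`. -/
noncomputable def sqLoss (m : Measure ℝ) (z : ℝ) : ℝ := ∫ θ, (θ - z) ^ 2 ∂m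

lemma sqLoss_gauss (m z : ℝ) (s : ℝ≥0) :
    sqLoss (gaussianReal m s) z = (m - z) ^ 2 + s := by
  unfold sqLoss
  have h : ∀ θ : ℝ, (θ - z) ^ 2 = θ ^ 2 + (-2 * z) * θ + z ^ 2 := fun θ => by ring
  simp_rw [h]
  have i2 := gauss_i2 m s
  have i1 : Integrable (fun θ : ℝ => (-2 * z) * θ) (gaussianReal m s) :=
    (gauss_i1 m s).const_mul _
  have isum : Integrable (fun θ : ℝ => θ ^ 2 + (-2 * z) * θ) (gaussianReal m s) := i2.add i1
  rw [integral_add isum (integrable_const _), integral_add i2 i1, integral_const_mul,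
    gauss_m1, gauss_m2, integral_const]
  simp
  ring

lemma pop_int (m μ : ℝ) (v s : ℝ≥0) :
    ∫ z, sqLoss (gaussianReal m s) z ∂(gaussianReal μ v)
      = (m - μ) ^ 2 + v + s := by
  simp_rw [sqLoss_gauss]
  have h : ∀ z : ℝ, (m - z) ^ 2 + (s:ℝ) = z ^ 2 + (-2*m) * z + (m^2 + s) := fun z => by ring
  simp_rw [h]
  have i2 := gauss_i2 μ v
  have i1 : Integrable (fun z : ℝ => (-2 * m) * z) (gaussianReal μ v) :=
    (gauss_i1 μ v).const_mul _
  have isum : Integrable (fun z : ℝ => z ^ 2 + (-2 * m) * z) (gaussianReal μ v) := i2.add i1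
  rw [integral_add isum (integrable_const _), integral_add i2 i1, integral_const_mul,
    gauss_m1, gauss_m2, integral_const]
  simp
  ring

lemma integrable_dirac_my {f : ℝ → ℝ} (hf : Measurable f) (a : ℝ) :
    Integrable f (Measure.dirac a) := by
  refine ⟨hf.aestronglyMeasurable, ?_⟩
  simp [HasFiniteIntegral, lintegral_dirac]

lemma emp_int {Ω : Type*} [MeasurableSpace Ω] (n : ℕ) (Z : ℕ → Ω → ℝ) (ω : Ω)
    (m : ℝ) (s : ℝ≥0) :
    ∫ z, sqLoss (gaussianReal m s) z ∂(empMeas n Z ω)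
      = (n:ℝ)⁻¹ * ∑ i ∈ Finset.range n, ((m - Z i ω) ^ 2 + s) := by
  simp_rw [sqLoss_gauss]
  unfold empMeas
  rw [integral_smul_measure, integral_finset_sum_measure]
  · simp_rw [integral_dirac]
    simp [ENNReal.toReal_inv, smul_eq_mul]
  · intro i _
    exact integrable_dirac_my (by fun_prop) _

/-- Gaussian mean estimation.  For the learning map
`𝔪(ν_n) = N(E_{Z∼ν_n}[Z], σ̃²/n)` (the law of the empirical-mean estimator) trained with
the squared loss on `n` i.i.d. samples from `N(μ, σ̃²)`, the weak generalization error is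
exactly `2σ̃²/n`. -/
theorem gaussian_mean_estimation_gen_error
    {Ω : Type*} [MeasurableSpace Ω] (μΩ : Measure Ω) [IsProbabilityMeasure μΩ]
    (n : ℕ) (hn : 0 < n) (μ₀ : ℝ) (v : ℝ≥0) (hv : v ≠ 0)
    (Z : ℕ → Ω → ℝ) (hmeas : ∀ i, Measurable (Z i))
    (hindep : iIndepFun Z μΩ)
    (hlaw : ∀ i, Measure.map (Z i) μΩ = gaussianReal μ₀ v) :
    ∫ ω, ((∫ z, sqLoss (gaussianReal ((∑ i ∈ Finset.range n, Z i ω) / n) (v / n)) z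
            ∂(gaussianReal μ₀ v)) -
          ∫ z, sqLoss (gaussianReal ((∑ i ∈ Finset.range n, Z i ω) / n) (v / n)) z
            ∂(empMeas n Z ω)) ∂μΩ = 2 * (v : ℝ) / n := by
  have hnR : (0:ℝ) < n := Nat.cast_pos.mpr hn
  have hnne : (n:ℝ) ≠ 0 := hnR.ne'
  set S : Ω → ℝ := fun ω => ∑ i ∈ Finset.range n, Z i ω with hS
  -- basic facts about each Z i
  have hZi1 : ∀ i, Integrable (Z i) μΩ := by
    intro i
    have h := gauss_i1 μ₀ v
    rw [← hlaw i, integrable_map_measure measurable_id'.aestronglyMeasurable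
      (hmeas i).aemeasurable] at h
    exact h
  have hEZi : ∀ i, ∫ ω, Z i ω ∂μΩ = μ₀ := by
    intro i
    have h := gauss_m1 μ₀ v
    rwa [← hlaw i, integral_map (hmeas i).aemeasurable
      measurable_id'.aestronglyMeasurable] at h
  have hZi2int : ∀ i, Integrable (fun ω => Z i ω ^ 2) μΩ := by
    intro i
    have h := gauss_i2 μ₀ v
    rw [← hlaw i, integrable_map_measure
      ((measurable_id'.pow_const 2).aestronglyMeasurable) (hmeas i).aemeasurable] at h
    exact h
  have hEZi2 : ∀ i, ∫ ω, Z i ω ^ 2 ∂μΩ = μ₀ ^ 2 + v := by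
    intro i
    have h := gauss_m2 μ₀ v
    rwa [← hlaw i, integral_map (hmeas i).aemeasurable
      ((measurable_id'.pow_const 2).aestronglyMeasurable)] at h
  have hmem2 : ∀ i, MemLp (Z i) 2 μΩ := by
    intro i
    have hid : MemLp (fun x : ℝ => x) 2 (gaussianReal μ₀ v) := by
      rw [memLp_two_iff_integrable_sq measurable_id'.aestronglyMeasurable]
      exact gauss_i2 μ₀ v
    rw [← hlaw i] at hid
    have h := (memLp_map_measure_iff measurable_id'.aestronglyMeasurable
      (hmeas i).aemeasurable).mp hid
    exact h
  -- moments of the sum S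
  have heS : (∑ i ∈ Finset.range n, Z i) = S := by ext ω; simp [hS]
  have hSmem : MemLp S 2 μΩ := by
    have h := memLp_finset_sum' (Finset.range n) (fun i _ => hmem2 i)
    rwa [heS] at h
  have hSint : Integrable S μΩ := hSmem.integrable one_le_two
  have hS2int : Integrable (fun ω => S ω ^ 2) μΩ := by
    have h := (memLp_two_iff_integrable_sq hSmem.aestronglyMeasurable).mp hSmem
    simpa using h
  have hES : ∫ ω, S ω ∂μΩ = n * μ₀ := by
    simp only [hS]
    rw [integral_finset_sum _ (fun i _ => hZi1 i)]
    simp [hEZi, mul_comm]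
  have hVarS : variance S μΩ = n * v := by
    rw [← heS, IndepFun.variance_sum (fun i _ => hmem2 i)
      (fun i _ j _ hij => hindep.indepFun hij)]
    have hvar : ∀ i, variance (Z i) μΩ = v := by
      intro i
      rw [variance_eq_sub (hmem2 i)]
      have h2 : μΩ[Z i ^ 2] = μ₀ ^ 2 + v := by
        have := hEZi2 i
        simpa [Pi.pow_apply] using this
      rw [h2, hEZi i]
      ring
    simp [hvar, mul_comm]
  have hES2 : ∫ ω, S ω ^ 2 ∂μΩ = n * v + (n * μ₀) ^ 2 := by
    have h := variance_eq_sub hSmem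
    rw [hVarS] at h
    have h2 : μΩ[S ^ 2] = ∫ ω, S ω ^ 2 ∂μΩ := by simp [Pi.pow_apply]
    have h3 : μΩ[S] = ∫ ω, S ω ∂μΩ := rfl
    rw [h2, h3, hES] at h
    linarith
  -- pointwise identity for the generalization gap
  have hpt : ∀ ω : Ω,
      (∫ z, sqLoss (gaussianReal ((∑ i ∈ Finset.range n, Z i ω) / n) (v / n)) z
          ∂(gaussianReal μ₀ v)) -
        ∫ z, sqLoss (gaussianReal ((∑ i ∈ Finset.range n, Z i ω) / n) (v / n)) z
          ∂(empMeas n Z ω)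
      = ((v:ℝ) + μ₀ ^ 2) + (-(2 * μ₀ / n)) * S ω + (2 / (n:ℝ) ^ 2) * S ω ^ 2
        + (-(n:ℝ)⁻¹) * ∑ i ∈ Finset.range n, Z i ω ^ 2 := by
    intro ω
    rw [pop_int, emp_int]
    have hcoe : ((v / n : ℝ≥0) : ℝ) = (v:ℝ) / n := by push_cast; ring
    rw [hcoe]
    have hsum : ∑ i ∈ Finset.range n, (((∑ i ∈ Finset.range n, Z i ω) / n - Z i ω) ^ 2
          + (v:ℝ) / n)
        = n * ((S ω / n) ^ 2 + (v:ℝ)/n) - 2 * (S ω / n) * S ω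
          + ∑ i ∈ Finset.range n, Z i ω ^ 2 := by
      have hterm : ∀ i, ((∑ i ∈ Finset.range n, Z i ω) / n - Z i ω) ^ 2 + (v:ℝ) / n
          = ((S ω / n) ^ 2 + (v:ℝ)/n) - 2 * (S ω / n) * Z i ω + Z i ω ^ 2 := by
        intro i
        simp only [hS]
        ring
      rw [Finset.sum_congr rfl fun i _ => hterm i]
      rw [Finset.sum_add_distrib, Finset.sum_sub_distrib, Finset.sum_const,
        Finset.card_range, nsmul_eq_mul, ← Finset.mul_sum]
    rw [hsum]
    simp only [hS]
    field_simp
    ring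
  simp only [hpt]
  -- integrate term by term
  have hTint : Integrable (fun ω => ∑ i ∈ Finset.range n, Z i ω ^ 2) μΩ :=
    integrable_finset_sum _ (fun i _ => hZi2int i)
  have hET : ∫ ω, ∑ i ∈ Finset.range n, Z i ω ^ 2 ∂μΩ = n * (μ₀ ^ 2 + v) := by
    rw [integral_finset_sum _ (fun i _ => hZi2int i)]
    simp only [hEZi2, Finset.sum_const, Finset.card_range, nsmul_eq_mul]
  have i1 : Integrable (fun ω => (-(2 * μ₀ / n)) * S ω) μΩ := hSint.const_mul _
  have i2 : Integrable (fun ω => (2 / (n:ℝ) ^ 2) * S ω ^ 2) μΩ := hS2int.const_mul _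
  have i3 : Integrable (fun ω => (-(n:ℝ)⁻¹) * ∑ i ∈ Finset.range n, Z i ω ^ 2) μΩ :=
    hTint.const_mul _
  have i01 : Integrable (fun ω => ((v:ℝ) + μ₀ ^ 2) + (-(2 * μ₀ / n)) * S ω) μΩ :=
    (integrable_const _).add i1
  have i012 : Integrable (fun ω => (((v:ℝ) + μ₀ ^ 2) + (-(2 * μ₀ / n)) * S ω)
      + (2 / (n:ℝ) ^ 2) * S ω ^ 2) μΩ := i01.add i2
  rw [integral_add i012 i3, integral_add i01 i2, integral_add (integrable_const _) i1,
    integral_const, integral_const_mul, integral_const_mul, integral_const_mul,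
    hES, hES2, hET]
  simp only [probReal_univ, measure_univ, ENNReal.toReal_one, smul_eq_mul, one_mul]
  field_simp
  ring
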